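/- Let T : ℝ^m → ℝ^n (m ≤ n) be an injective linear map, x₀ ∈ ℝ^m, and δ > 0. Then the m-dimensional Lebesgue measure of the set {x ∈ ℝ^m : ‖T x − T x₀‖ ≤ δ} equals Γ_m · δ^m / √det(TᵀT), where Γ_m is the Lebesgue measure of the unit ball in ℝ^m. -/

import Mathlib

open MeasureTheory RealInnerProductSpace
open scoped MatrixOrder

private abbrev Eu (m : ℕ) := EuclideanSpace ℝ (Fin m)

set_option maxHeartbeats 1000000

/-- the Lebesgue measure of the ellipsoid
`{x : ‖T x − T x₀‖ ≤ δ}` determined by an injective linear map `T : ℝ^m → ℝ^n` equals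
`Γ_m δ^m / √det(TᵀT)`, where `Γ_m` is the volume of the unit ball in `ℝ^m`. -/
theorem stmt_14 {m n : ℕ} (hmn : m ≤ n)
    (T : EuclideanSpace ℝ (Fin m) →L[ℝ] EuclideanSpace ℝ (Fin n))
    (hT : Function.Injective T)
    (x₀ : EuclideanSpace ℝ (Fin m)) (δ : ℝ) (hδ : 0 < δ) :
    volume {x : EuclideanSpace ℝ (Fin m) | ‖T x - T x₀‖ ≤ δ} =
      ENNReal.ofReal
        ((volume (Metric.closedBall (0 : EuclideanSpace ℝ (Fin m)) 1)).toReal * δ ^ m /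
          Real.sqrt (LinearMap.det
            (((ContinuousLinearMap.adjoint T).comp T :
                EuclideanSpace ℝ (Fin m) →L[ℝ] EuclideanSpace ℝ (Fin m)) :
              EuclideanSpace ℝ (Fin m) →ₗ[ℝ] EuclideanSpace ℝ (Fin m)))) := by
  classical
  set S : Eu m →L[ℝ] Eu m := (ContinuousLinearMap.adjoint T).comp T with hS
  have hinner : ∀ x : Eu m, (inner ℝ (S x) x : ℝ) = ‖T x‖ ^ 2 := by
    intro x
    rw [hS]
    simp only [ContinuousLinearMap.comp_apply]
    rw [ContinuousLinearMap.adjoint_inner_left, real_inner_self_eq_norm_sq]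
  have hSstar : star S = S := by
    rw [ContinuousLinearMap.star_eq_adjoint, hS, ContinuousLinearMap.adjoint_comp,
      ContinuousLinearMap.adjoint_adjoint]
  set M : Matrix (Fin m) (Fin m) ℝ := (Matrix.toEuclideanCLM (𝕜 := ℝ)).symm S with hM
  have hSM : Matrix.toEuclideanCLM (𝕜 := ℝ) M = S := by
    rw [hM]; exact (Matrix.toEuclideanCLM (𝕜 := ℝ)).apply_symm_apply S
  have hMherm : M.IsHermitian := by
    have h1 : Matrix.toEuclideanCLM (𝕜 := ℝ) (n := Fin m) (star M) =
        star (Matrix.toEuclideanCLM (𝕜 := ℝ) (n := Fin m) M) := map_star _ _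
    exact (Matrix.toEuclideanCLM (𝕜 := ℝ) (n := Fin m)).injective
      (by show Matrix.toEuclideanCLM (𝕜 := ℝ) (n := Fin m) (star M) =
            Matrix.toEuclideanCLM (𝕜 := ℝ) (n := Fin m) M
          rw [h1, hSM, hSstar])
  have hMpos : M.PosDef := by
    rw [Matrix.posDef_iff_dotProduct_mulVec]
    refine ⟨hMherm, fun x hx => ?_⟩
    have hx' : (WithLp.equiv 2 (Fin m → ℝ)).symm x ≠ 0 := by
      simpa using hx
    have hTx : T ((WithLp.equiv 2 (Fin m → ℝ)).symm x) ≠ 0 := fun h => by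
      exact hx' (hT (by simpa using h))
    have h0 := hinner ((WithLp.equiv 2 (Fin m → ℝ)).symm x)
    have key : dotProduct (star x) (M.mulVec x) =
        (inner ℝ (S ((WithLp.equiv 2 (Fin m → ℝ)).symm x))
          ((WithLp.equiv 2 (Fin m → ℝ)).symm x) : ℝ) := by
      rw [← hSM, WithLp.equiv_symm_apply, Matrix.toEuclideanCLM_toLp, real_inner_comm,
        EuclideanSpace.inner_toLp_toLp]
      simp
      exact dotProduct_comm _ _
    rw [key, h0]
    exact pow_pos (norm_pos_iff.mpr hTx) 2
  -- matrix square root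
  set A : Matrix (Fin m) (Fin m) ℝ := CFC.sqrt M with hA
  have hAA : A * A = M := CFC.sqrt_mul_sqrt_self M hMpos.posSemidef.nonneg
  have hAherm : A.IsHermitian := by
    have h := (CFC.sqrt_nonneg M).1; rwa [sub_zero] at h
  have hdetM : 0 < M.det := hMpos.det_pos
  have hdetAM : A.det * A.det = M.det := by rw [← Matrix.det_mul, hAA]
  have hdetA : A.det ≠ 0 := by
    intro h
    rw [h, mul_zero] at hdetAM
    rw [← hdetAM] at hdetM
    exact lt_irrefl 0 hdetM
  set P : Eu m →L[ℝ] Eu m := Matrix.toEuclideanCLM (𝕜 := ℝ) A with hP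
  have hPP : P * P = S := by rw [hP, ← map_mul, hAA, hSM]
  have hPstar : star P = P := by
    have h1 : star (Matrix.toEuclideanCLM (𝕜 := ℝ) (n := Fin m) A) =
        Matrix.toEuclideanCLM (𝕜 := ℝ) (n := Fin m) (star A) := (map_star _ _).symm
    rw [hP, h1]
    exact congrArg _ hAherm
  have hPadj : ContinuousLinearMap.adjoint P = P := by
    rw [← ContinuousLinearMap.star_eq_adjoint]; exact hPstar
  -- norm identity
  have hnorm : ∀ x : Eu m, ‖T x‖ = ‖P x‖ := by
    intro x
    have h1 : (inner ℝ (S x) x : ℝ) = ‖P x‖ ^ 2 := by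
      rw [← hPP]
      have he : (P * P) x = P (P x) := rfl
      rw [he]
      calc (inner ℝ (P (P x)) x : ℝ)
          = (inner ℝ (ContinuousLinearMap.adjoint P (P x)) x : ℝ) := by rw [hPadj]
        _ = (inner ℝ (P x) (P x) : ℝ) := ContinuousLinearMap.adjoint_inner_left P x (P x)
        _ = ‖P x‖ ^ 2 := real_inner_self_eq_norm_sq _
    have h3 : ‖T x‖ ^ 2 = ‖P x‖ ^ 2 := by rw [← hinner x, h1]
    have h4 := congrArg Real.sqrt h3
    simpa [Real.sqrt_sq, norm_nonneg] using h4
  -- determinants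
  have hdetP : LinearMap.det (P : Eu m →ₗ[ℝ] Eu m) = A.det := by
    rw [hP, Matrix.coe_toEuclideanCLM_eq_toEuclideanLin, Matrix.toEuclideanLin_eq_toLin,
      LinearMap.det_toLin]
  have hdetS : LinearMap.det (S : Eu m →ₗ[ℝ] Eu m) = A.det * A.det := by
    rw [← hSM, ← hAA, Matrix.coe_toEuclideanCLM_eq_toEuclideanLin, Matrix.toEuclideanLin_eq_toLin,
      LinearMap.det_toLin, Matrix.det_mul]
  -- set equality
  have hset : {x : Eu m | ‖T x - T x₀‖ ≤ δ} = P ⁻¹' Metric.closedBall (P x₀) δ := by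
    ext x
    simp only [Set.mem_setOf_eq, Set.mem_preimage, Metric.mem_closedBall, dist_eq_norm]
    rw [← map_sub, ← map_sub, hnorm]
  have hdetP_ne : LinearMap.det (P : Eu m →ₗ[ℝ] Eu m) ≠ 0 := by rw [hdetP]; exact hdetA
  have hΓ : volume (Metric.closedBall (0 : Eu m) 1) ≠ ⊤ :=
    (IsCompact.measure_lt_top (isCompact_closedBall _ _)).ne
  rw [hset, MeasureTheory.Measure.addHaar_preimage_continuousLinearMap volume hdetP_ne,
    MeasureTheory.Measure.addHaar_closedBall' volume _ hδ.le, hdetP]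
  have hrank : Module.finrank ℝ (Eu m) = m := finrank_euclideanSpace_fin
  rw [hrank, hdetS]
  rw [← ENNReal.ofReal_toReal hΓ, ← ENNReal.ofReal_mul (by positivity),
    ← ENNReal.ofReal_mul (by positivity)]
  congr 1
  rw [Real.sqrt_mul_self_eq_abs]
  rw [abs_inv]
  have habs : |A.det| ≠ 0 := abs_ne_zero.mpr hdetA
  field_simp
  ring
  exact (ENNReal.toReal_ofReal ENNReal.toReal_nonneg).symm
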